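/- Given numbered pattern pairs for two elements of 2V, it is decidable whether the two elements are equal: the predicate on pairs of (naturally encoded) numbered pattern pairs which holds exactly when the two pattern pairs define the same homeomorphism of C² is computable. -/

import Mathlib

/-- The Cantor space of infinite binary sequences. -/
abbrev Cantor : Type := ℕ → Bool

/-- Concatenation of a finite binary string with an infinite binary sequence. -/
def cat (α : List Bool) (ω : Cantor) : Cantor := fun k =>
  if h : k < α.length then α.get ⟨k, h⟩ else ω (k - α.length)

/-- The dyadic interval `I(α)`: all infinite binary sequences with prefix `α`. -/
def dyadicI (α : List Bool) : Set Cantor := Set.range (cat α)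

/-- The dyadic rectangle `R(α, β) = I(α) × I(β)` in `C²`. -/
def rect (α β : List Bool) : Set (Cantor × Cantor) :=
  {p | (∃ ψ, p.1 = cat α ψ) ∧ ∃ ω, p.2 = cat β ω}

/-- A finite list of dyadic rectangles forms a dyadic subdivision of `C²`. -/
def IsSubdivision (L : List (List Bool × List Bool)) : Prop :=
  (⋃ r ∈ L, rect r.1 r.2) = Set.univ ∧
    List.Pairwise (fun r s => Disjoint (rect r.1 r.2) (rect s.1 s.2)) L

/-- A numbered pattern pair for `2V`. -/
abbrev PatternPair : Type := List ((List Bool × List Bool) × (List Bool × List Bool))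

/-- The numbered pattern pair `pp` represents the map `f`: domains and ranges each form
dyadic subdivisions, and `f` maps each domain rectangle to the corresponding range
rectangle by prefix replacement. -/
def Represents (pp : PatternPair) (f : Cantor × Cantor → Cantor × Cantor) : Prop :=
  IsSubdivision (pp.map Prod.fst) ∧ IsSubdivision (pp.map Prod.snd) ∧
    ∀ r ∈ pp, ∀ ψ ω : Cantor,
      f (cat r.1.1 ψ, cat r.1.2 ω) = (cat r.2.1 ψ, cat r.2.2 ω)

/-! ### Auxiliary material -/

set_option maxHeartbeats 1000000

section Aux

/-- Boolean prefix test. -/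
def pref (u v : List Bool) : Bool := u ++ v.drop u.length == v

theorem pref_iff {u v : List Bool} : pref u v = true ↔ u <+: v := by
  simp only [pref, beq_iff_eq]
  constructor
  · intro h; exact ⟨_, h⟩
  · rintro ⟨t, rfl⟩; simp

/-- The longer of two strings. -/
def mx (u v : List Bool) : List Bool := if u.length ≤ v.length then v else u

theorem mx_eq_or (u v : List Bool) : mx u v = u ∨ mx u v = v := by
  unfold mx; split
  · exact Or.inr rfl
  · exact Or.inl rfl

theorem prefix_mx {u v : List Bool} (h : u <+: v ∨ v <+: u) :
    u <+: mx u v ∧ v <+: mx u v := by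
  unfold mx
  rcases h with h | h
  · rw [if_pos h.length_le]; exact ⟨h, List.prefix_refl v⟩
  · by_cases hl : u.length ≤ v.length
    · have hvu : v = u := h.eq_of_length (le_antisymm h.length_le hl)
      rw [if_pos hl, hvu]
      exact ⟨List.prefix_refl u, List.prefix_refl u⟩
    · rw [if_neg hl]; exact ⟨List.prefix_refl u, h⟩

theorem cat_lt (α : List Bool) (ψ : Cantor) (k : ℕ) (h : k < α.length) :
    cat α ψ k = α[k] := by
  unfold cat; rw [dif_pos h]; rfl

theorem cat_ge (α : List Bool) (ψ : Cantor) (k : ℕ) (h : α.length ≤ k) :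
    cat α ψ k = ψ (k - α.length) := by
  unfold cat; rw [dif_neg (not_lt.2 h)]

theorem cat_append (u v : List Bool) (ψ : Cantor) :
    cat (u ++ v) ψ = cat u (cat v ψ) := by
  funext k
  by_cases h1 : k < u.length
  · rw [cat_lt u (cat v ψ) k h1,
      cat_lt (u ++ v) ψ k (by simp; omega)]
    simp [List.getElem_append, h1]
  · rw [cat_ge u (cat v ψ) k (not_lt.1 h1)]
    by_cases h2 : k - u.length < v.length
    · rw [cat_lt v ψ _ h2, cat_lt (u ++ v) ψ k (by simp; omega)]
      simp [List.getElem_append, h1]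
    · rw [cat_ge v ψ _ (not_lt.1 h2), cat_ge (u ++ v) ψ k (by simp; omega)]
      congr 1
      simp
      omega

theorem cat_ext {u v : List Bool} (h : ∀ ψ : Cantor, cat u ψ = cat v ψ) : u = v := by
  -- first, lengths are equal
  have key : ∀ u v : List Bool, (∀ ψ : Cantor, cat u ψ = cat v ψ) →
      u.length < v.length → False := by
    intro u v h hlt
    have h2 := congrFun (h (fun _ => !(v[u.length]'hlt))) u.length
    rw [cat_ge u _ _ le_rfl, cat_lt v _ _ hlt] at h2
    simp at h2
  have hlen : u.length = v.length := by
    rcases lt_trichotomy u.length v.length with h' | h' | h'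
    · exact absurd h' (fun hh => key u v h hh)
    · exact h'
    · exact absurd h' (fun hh => key v u (fun ψ => (h ψ).symm) hh)
  apply List.ext_getElem hlen
  intro n h1 h2
  have h3 := congrFun (h (fun _ => false)) n
  rw [cat_lt u _ n h1, cat_lt v _ n h2] at h3
  exact h3

theorem prefix_of_cat_eq {u v : List Bool} {ψ ω : Cantor}
    (h : cat u ψ = cat v ω) (hl : u.length ≤ v.length) : u <+: v := by
  rw [List.prefix_iff_eq_take]
  apply List.ext_getElem (by simp [hl])
  intro n h1 h2
  have h3 := congrFun h n
  rw [cat_lt u _ n h1, cat_lt v _ n (lt_of_lt_of_le h1 hl)] at h3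
  simpa using h3

theorem cat_decomp {u v : List Bool} (h : u <+: v) (ψ : Cantor) :
    cat v ψ = cat u (cat (v.drop u.length) ψ) := by
  obtain ⟨t, rfl⟩ := h
  rw [List.drop_left, cat_append]

/-- Local abbreviation for an entry of a pattern pair. -/
abbrev PPEntry : Type := (List Bool × List Bool) × (List Bool × List Bool)

/-- Compatibility check for two entries: if the domain rectangles overlap, then the two
prefix replacements must agree on the overlap. -/
def chk (r s : PPEntry) : Bool :=
  !((pref r.1.1 s.1.1 || pref s.1.1 r.1.1) && (pref r.1.2 s.1.2 || pref s.1.2 r.1.2)) ||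
    (decide (r.2.1 ++ (mx r.1.1 s.1.1).drop r.1.1.length =
        s.2.1 ++ (mx r.1.1 s.1.1).drop s.1.1.length) &&
     decide (r.2.2 ++ (mx r.1.2 s.1.2).drop r.1.2.length =
        s.2.2 ++ (mx r.1.2 s.1.2).drop s.1.2.length))

theorem pref_eq_decide (u v : List Bool) : pref u v = decide (u <+: v) := by
  by_cases h : u <+: v
  · simp [pref_iff.2 h, h]
  · rw [decide_eq_false h, ← Bool.not_eq_true]
    exact fun hh => h (pref_iff.1 hh)

theorem chk_iff (r s : PPEntry) : chk r s = true ↔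
    ((r.1.1 <+: s.1.1 ∨ s.1.1 <+: r.1.1) ∧ (r.1.2 <+: s.1.2 ∨ s.1.2 <+: r.1.2) →
      r.2.1 ++ (mx r.1.1 s.1.1).drop r.1.1.length =
        s.2.1 ++ (mx r.1.1 s.1.1).drop s.1.1.length ∧
      r.2.2 ++ (mx r.1.2 s.1.2).drop r.1.2.length =
        s.2.2 ++ (mx r.1.2 s.1.2).drop s.1.2.length) := by
  simp only [chk, pref_eq_decide, Bool.or_eq_true, Bool.and_eq_true, Bool.not_eq_true',
    Bool.and_eq_false_iff, Bool.or_eq_false_iff, decide_eq_true_eq, decide_eq_false_iff_not,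
    beq_iff_eq]
  tauto

/-! ### Primitive recursiveness -/

theorem primrec_drop : Primrec₂ (fun n (l : List Bool) => l.drop n) :=
  (Primrec.nat_rec' Primrec.fst Primrec.snd
      ((Primrec.list_tail.comp (Primrec.snd.comp Primrec.snd)).to₂)).of_eq
    fun p => by
      rcases p with ⟨n, l⟩
      induction n with
      | zero => rfl
      | succ n ih =>
        show (Nat.rec l (fun _ IH => IH.tail) n : List Bool).tail = _
        rw [ih, List.tail_drop]

theorem primrec_pref : Primrec₂ pref :=
  Primrec.of_eq
    (Primrec.beq.comp
      (Primrec.list_append.comp Primrec.fst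
        (Primrec₂.comp primrec_drop (Primrec.list_length.comp Primrec.fst) Primrec.snd))
      Primrec.snd)
    (fun p => by simp [pref])

theorem primrec_mx : Primrec₂ mx :=
  Primrec.of_eq
    (Primrec.ite
      (Primrec.nat_le.comp (Primrec.list_length.comp Primrec.fst)
        (Primrec.list_length.comp Primrec.snd))
      Primrec.snd Primrec.fst)
    (fun p => by simp [mx])

theorem primrec_chk : Primrec₂ chk := by
  have p11 : Primrec fun p : PPEntry × PPEntry => p.1.1.1 :=
    Primrec.fst.comp (Primrec.fst.comp Primrec.fst)
  have p12 : Primrec fun p : PPEntry × PPEntry => p.1.1.2 :=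
    Primrec.snd.comp (Primrec.fst.comp Primrec.fst)
  have p21 : Primrec fun p : PPEntry × PPEntry => p.1.2.1 :=
    Primrec.fst.comp (Primrec.snd.comp Primrec.fst)
  have p22 : Primrec fun p : PPEntry × PPEntry => p.1.2.2 :=
    Primrec.snd.comp (Primrec.snd.comp Primrec.fst)
  have q11 : Primrec fun p : PPEntry × PPEntry => p.2.1.1 :=
    Primrec.fst.comp (Primrec.fst.comp Primrec.snd)
  have q12 : Primrec fun p : PPEntry × PPEntry => p.2.1.2 :=
    Primrec.snd.comp (Primrec.fst.comp Primrec.snd)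
  have q21 : Primrec fun p : PPEntry × PPEntry => p.2.2.1 :=
    Primrec.fst.comp (Primrec.snd.comp Primrec.snd)
  have q22 : Primrec fun p : PPEntry × PPEntry => p.2.2.2 :=
    Primrec.snd.comp (Primrec.snd.comp Primrec.snd)
  have hor : Primrec₂ (· || · : Bool → Bool → Bool) := Primrec.dom_bool₂ _
  have hand : Primrec₂ (· && · : Bool → Bool → Bool) := Primrec.dom_bool₂ _
  have hnot : Primrec (! · : Bool → Bool) := Primrec.dom_bool _
  -- the two "comparable" tests
  have c1 : Primrec fun p : PPEntry × PPEntry =>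
      (pref p.1.1.1 p.2.1.1 || pref p.2.1.1 p.1.1.1) :=
    hor.comp (primrec_pref.comp p11 q11) (primrec_pref.comp q11 p11)
  have c2 : Primrec fun p : PPEntry × PPEntry =>
      (pref p.1.1.2 p.2.1.2 || pref p.2.1.2 p.1.1.2) :=
    hor.comp (primrec_pref.comp p12 q12) (primrec_pref.comp q12 p12)
  -- outputs
  have o1 : Primrec fun p : PPEntry × PPEntry =>
      decide (p.1.2.1 ++ (mx p.1.1.1 p.2.1.1).drop p.1.1.1.length =
        p.2.2.1 ++ (mx p.1.1.1 p.2.1.1).drop p.2.1.1.length) :=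
    (Primrec.eq.comp
      (Primrec.list_append.comp p21
        (primrec_drop.comp (Primrec.list_length.comp p11) (primrec_mx.comp p11 q11)))
      (Primrec.list_append.comp q21
        (primrec_drop.comp (Primrec.list_length.comp q11) (primrec_mx.comp p11 q11)))).decide
  have o2 : Primrec fun p : PPEntry × PPEntry =>
      decide (p.1.2.2 ++ (mx p.1.1.2 p.2.1.2).drop p.1.1.2.length =
        p.2.2.2 ++ (mx p.1.1.2 p.2.1.2).drop p.2.1.2.length) :=
    (Primrec.eq.comp
      (Primrec.list_append.comp p22
        (primrec_drop.comp (Primrec.list_length.comp p12) (primrec_mx.comp p12 q12)))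
      (Primrec.list_append.comp q22
        (primrec_drop.comp (Primrec.list_length.comp q12) (primrec_mx.comp p12 q12)))).decide
  exact hor.comp (hnot.comp (hand.comp c1 c2)) (hand.comp o1 o2)

theorem primrec_all {α β : Type} [Primcodable α] [Primcodable β] {f : α → List β}
    {p : α → β → Bool} (hf : Primrec f) (hp : Primrec₂ p) :
    Primrec fun a => (f a).all (p a) :=
  (Primrec.list_foldr hf (Primrec.const true)
      (((Primrec.dom_bool₂ (· && ·)).comp
        (hp.comp Primrec.fst (Primrec.fst.comp Primrec.snd))
        (Primrec.snd.comp Primrec.snd)).to₂)).of_eq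
    fun a => by
      generalize f a = l
      induction l with
      | nil => rfl
      | cons b l ih => simp [List.all_cons, ← ih]

/-- The boolean equality test on pattern pairs. -/
def chkAll (x : PatternPair × PatternPair) : Bool :=
  x.1.all fun r => x.2.all fun s => chk r s

theorem primrec_chkAll : Primrec chkAll := by
  have inner : Primrec₂ fun (q : (PatternPair × PatternPair) × PPEntry) (s : PPEntry) =>
      chk q.2 s :=
    Primrec₂.comp primrec_chk (Primrec.snd.comp Primrec.fst) Primrec.snd
  have h2 : Primrec fun q : (PatternPair × PatternPair) × PPEntry =>
      q.1.2.all fun s => chk q.2 s :=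
    primrec_all (Primrec.snd.comp Primrec.fst) inner
  exact primrec_all Primrec.fst h2.to₂

theorem chkAll_iff (x : PatternPair × PatternPair) :
    chkAll x = true ↔ ∀ r ∈ x.1, ∀ s ∈ x.2, chk r s = true := by
  simp [chkAll, List.all_eq_true]

end Aux

/-- Equality of elements of `2V` given by numbered pattern pairs is decidable: there is a
computable predicate on pairs of numbered pattern pairs which, whenever the two pattern
pairs represent maps `f` and `g` of `C²`, holds exactly when `f = g`. -/
theorem pattern_pair_equality_decidable :
    ∃ P : PatternPair × PatternPair → Prop, ComputablePred P ∧
      ∀ (pp₁ pp₂ : PatternPair) (f g : Cantor × Cantor → Cantor × Cantor),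
        Represents pp₁ f → Represents pp₂ g → (P (pp₁, pp₂) ↔ f = g) := by
  refine ⟨fun x => chkAll x = true,
    ComputablePred.computable_iff.2 ⟨chkAll, primrec_chkAll.to_comp, rfl⟩, ?_⟩
  intro pp₁ pp₂ f g hf hg
  obtain ⟨hf1, _, hf3⟩ := hf
  obtain ⟨hg1, _, hg3⟩ := hg
  show chkAll (pp₁, pp₂) = true ↔ f = g
  rw [chkAll_iff]
  constructor
  · -- check passes → f = g
    intro hP
    funext p
    -- find covering rectangles
    have hmem1 : p ∈ ⋃ q ∈ pp₁.map Prod.fst, rect q.1 q.2 := by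
      rw [hf1.1]; trivial
    have hmem2 : p ∈ ⋃ q ∈ pp₂.map Prod.fst, rect q.1 q.2 := by
      rw [hg1.1]; trivial
    simp only [Set.mem_iUnion, List.mem_map] at hmem1 hmem2
    obtain ⟨q1, ⟨⟨r, hr, rfl⟩, hpr⟩⟩ := hmem1
    obtain ⟨q2, ⟨⟨s, hs, rfl⟩, hps⟩⟩ := hmem2
    obtain ⟨⟨ψ₁, hψ₁⟩, ⟨ω₁, hω₁⟩⟩ := hpr
    obtain ⟨⟨ψ₂, hψ₂⟩, ⟨ω₂, hω₂⟩⟩ := hps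
    have heqα : cat r.1.1 ψ₁ = cat s.1.1 ψ₂ := hψ₁.symm.trans hψ₂
    have heqβ : cat r.1.2 ω₁ = cat s.1.2 ω₂ := hω₁.symm.trans hω₂
    have hcα : r.1.1 <+: s.1.1 ∨ s.1.1 <+: r.1.1 := by
      rcases le_total r.1.1.length s.1.1.length with h | h
      · exact Or.inl (prefix_of_cat_eq heqα h)
      · exact Or.inr (prefix_of_cat_eq heqα.symm h)
    have hcβ : r.1.2 <+: s.1.2 ∨ s.1.2 <+: r.1.2 := by
      rcases le_total r.1.2.length s.1.2.length with h | h
      · exact Or.inl (prefix_of_cat_eq heqβ h)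
      · exact Or.inr (prefix_of_cat_eq heqβ.symm h)
    obtain ⟨hα₁U, hα₂U⟩ := prefix_mx hcα
    obtain ⟨hβ₁U, hβ₂U⟩ := prefix_mx hcβ
    -- p.1 lies in the interval of the longer string
    have hUα : ∃ χ, p.1 = cat (mx r.1.1 s.1.1) χ := by
      rcases mx_eq_or r.1.1 s.1.1 with h | h
      · exact ⟨ψ₁, by rw [h]; exact hψ₁⟩
      · exact ⟨ψ₂, by rw [h]; exact hψ₂⟩
    have hUβ : ∃ χ, p.2 = cat (mx r.1.2 s.1.2) χ := by
      rcases mx_eq_or r.1.2 s.1.2 with h | h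
      · exact ⟨ω₁, by rw [h]; exact hω₁⟩
      · exact ⟨ω₂, by rw [h]; exact hω₂⟩
    obtain ⟨χα, hχα⟩ := hUα
    obtain ⟨χβ, hχβ⟩ := hUβ
    have hfp : f p =
        (cat (r.2.1 ++ (mx r.1.1 s.1.1).drop r.1.1.length) χα,
         cat (r.2.2 ++ (mx r.1.2 s.1.2).drop r.1.2.length) χβ) := by
      have h1 := hf3 r hr (cat ((mx r.1.1 s.1.1).drop r.1.1.length) χα)
        (cat ((mx r.1.2 s.1.2).drop r.1.2.length) χβ)
      rw [← cat_decomp hα₁U χα, ← cat_decomp hβ₁U χβ, ← hχα, ← hχβ] at h1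
      rw [← cat_append, ← cat_append] at h1
      simpa using h1
    have hgp : g p =
        (cat (s.2.1 ++ (mx r.1.1 s.1.1).drop s.1.1.length) χα,
         cat (s.2.2 ++ (mx r.1.2 s.1.2).drop s.1.2.length) χβ) := by
      have h1 := hg3 s hs (cat ((mx r.1.1 s.1.1).drop s.1.1.length) χα)
        (cat ((mx r.1.2 s.1.2).drop s.1.2.length) χβ)
      rw [← cat_decomp hα₂U χα, ← cat_decomp hβ₂U χβ, ← hχα, ← hχβ] at h1
      rw [← cat_append, ← cat_append] at h1
      simpa using h1
    obtain ⟨e1, e2⟩ := (chk_iff r s).1 (hP r hr s hs) ⟨hcα, hcβ⟩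
    rw [hfp, hgp, e1, e2]
  · -- f = g → check passes
    intro hfg r hr s hs
    rw [chk_iff]
    rintro ⟨hcα, hcβ⟩
    obtain ⟨hα₁U, hα₂U⟩ := prefix_mx hcα
    obtain ⟨hβ₁U, hβ₂U⟩ := prefix_mx hcβ
    have key : ∀ ψ ω : Cantor,
        (cat (r.2.1 ++ (mx r.1.1 s.1.1).drop r.1.1.length) ψ,
         cat (r.2.2 ++ (mx r.1.2 s.1.2).drop r.1.2.length) ω) =
        (cat (s.2.1 ++ (mx r.1.1 s.1.1).drop s.1.1.length) ψ,
         cat (s.2.2 ++ (mx r.1.2 s.1.2).drop s.1.2.length) ω) := by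
      intro ψ ω
      have h1 := hf3 r hr (cat ((mx r.1.1 s.1.1).drop r.1.1.length) ψ)
        (cat ((mx r.1.2 s.1.2).drop r.1.2.length) ω)
      have h2 := hg3 s hs (cat ((mx r.1.1 s.1.1).drop s.1.1.length) ψ)
        (cat ((mx r.1.2 s.1.2).drop s.1.2.length) ω)
      rw [← cat_decomp hα₁U ψ, ← cat_decomp hβ₁U ω, ← cat_append, ← cat_append] at h1
      rw [← cat_decomp hα₂U ψ, ← cat_decomp hβ₂U ω, ← cat_append, ← cat_append] at h2
      rw [← h1, ← h2, hfg]
    constructor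
    · apply cat_ext
      intro ψ
      have := key ψ (fun _ => false)
      exact congrArg Prod.fst this
    · apply cat_ext
      intro ω
      have := key (fun _ => false) ω
      exact congrArg Prod.snd this
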